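/- Let (V,c,p) be an instance of Asymmetric A Priori TSP with p(V) := Σ_{v∈V} p(v) > 0, and let S be a tour on V. Then there exists a vertex d ∈ V such that, defining p' : V → [0,1] by p'(d) = 1 and p'(v) = p(v) for v ≠ d, the following two inequalities hold: (i) E_{A∼p}[c(T[A])] ≤ E_{A∼p'}[c(T[A])] for every tour T on V, and (ii) E_{A∼p'}[c(S[A])] ≤ 2·(1 + 1/p(V)) · E_{A∼p}[c(S[A])]. -/

import Mathlib

noncomputable section

/-- The cost of a tour given as a cyclic list: the sum of `c` over consecutive pairs
(cyclically). -/
def cycCost {V : Type*} (c : V → V → ℝ) (l : List V) : ℝ :=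
  (List.zipWith c l (l.rotate 1)).sum

/-- `l` is a tour on the finite set `A`: a cyclic ordering of `A`, visiting each element
exactly once. -/
def IsTour {V : Type*} [DecidableEq V] (A : Finset V) (l : List V) : Prop :=
  l.Nodup ∧ l.toFinset = A

/-- Short-cutting a tour to the set `A` of active vertices. -/
def shortcut {V : Type*} [DecidableEq V] (l : List V) (A : Finset V) : List V :=
  l.filter (fun v => v ∈ A)

/-- The expectation of `f` over the random set of active vertices, where each vertex `v`
is active independently with probability `p v`. -/
def apExpect {V : Type*} [Fintype V] [DecidableEq V] (p : V → ℝ) (f : Finset V → ℝ) : ℝ :=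
  ∑ A : Finset V, (∏ v ∈ A, p v) * (∏ v ∈ Aᶜ, (1 - p v)) * f A

set_option linter.unusedSectionVars false
set_option linter.unusedVariables false
set_option maxHeartbeats 1000000

namespace S7

section ListPart
variable {V : Type*} [DecidableEq V]

/-- cost of a path starting at `a` going through `l`. -/
def pcost (c : V → V → ℝ) : V → List V → ℝ
  | _, [] => 0
  | a, b :: t => c a b + pcost c b t

lemma pcost_nonneg (c : V → V → ℝ) (hc0 : ∀ x y, 0 ≤ c x y) (a : V) (l : List V) :
    0 ≤ pcost c a l := by
  induction l generalizing a with
  | nil => simp [pcost]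
  | cons b t ih => exact add_nonneg (hc0 a b) (ih b)

lemma zip_eq_pcost (c : V → V → ℝ) (x : V) : ∀ (t : List V) (a : V),
    (List.zipWith c (a :: t) (t ++ [x])).sum = pcost c a (t ++ [x]) := by
  intro t
  induction t with
  | nil => intro a; simp [pcost]
  | cons b t' ih => intro a; simp only [List.cons_append, List.zipWith_cons_cons,
      List.sum_cons, pcost, List.append_eq, ih b]

lemma cycCost_cons (c : V → V → ℝ) (a : V) (t : List V) :
    cycCost c (a :: t) = pcost c a (t ++ [a]) := by
  rw [cycCost, List.rotate_cons_succ, List.rotate_zero, zip_eq_pcost]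

lemma cycCost_nil (c : V → V → ℝ) : cycCost c ([] : List V) = 0 := by simp [cycCost]

lemma pcost_triangle (c : V → V → ℝ) (hc0 : ∀ x y, 0 ≤ c x y)
    (htri : ∀ x y z, c x z ≤ c x y + c y z) (a x : V) (l : List V) :
    pcost c a l ≤ c a x + pcost c x l := by
  cases l with
  | nil => simpa [pcost] using hc0 a x
  | cons b t => simp only [pcost]; have := htri a x b; linarith

lemma pcost_last (c : V → V → ℝ) (htri : ∀ x y z, c x z ≤ c x y + c y z) (a b : V) :
    ∀ (t : List V) (x : V), pcost c x (t ++ [b]) ≤ pcost c x (t ++ [a]) + c a b := by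
  intro t
  induction t with
  | nil => intro x; simpa [pcost] using htri x a b
  | cons y t' ih => intro x; simp only [List.cons_append, pcost, List.append_eq]
                    have := ih y; linarith

lemma pcost_filter (c : V → V → ℝ) (hc0 : ∀ x y, 0 ≤ c x y)
    (htri : ∀ x y z, c x z ≤ c x y + c y z) (Q : V → Bool) (b : V) :
    ∀ (t : List V) (a : V), pcost c a (t.filter Q ++ [b]) ≤ pcost c a (t ++ [b]) := by
  intro t
  induction t with
  | nil => intro a; simp
  | cons x xs ih =>
    intro a
    by_cases hx : Q x = true
    · simp only [List.filter_cons, hx, if_pos, List.cons_append, pcost]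
      exact add_le_add le_rfl (ih x)
    · simp only [List.filter_cons, hx, if_neg, Bool.false_eq_true, not_false_iff,
        List.cons_append, pcost]
      calc pcost c a (List.filter Q xs ++ [b]) ≤ pcost c a (xs ++ [b]) := ih a
        _ ≤ c a x + pcost c x (xs ++ [b]) := pcost_triangle c hc0 htri a x _

lemma cycCost_cons_le (c : V → V → ℝ) (hc0 : ∀ x y, 0 ≤ c x y)
    (hcrefl : ∀ v, c v v = 0) (htri : ∀ x y z, c x z ≤ c x y + c y z) (a : V) (t : List V) :
    cycCost c t ≤ cycCost c (a :: t) := by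
  cases t with
  | nil => simp [cycCost_nil, cycCost_cons, pcost, hcrefl]
  | cons b t' =>
    rw [cycCost_cons, cycCost_cons]
    simp only [List.cons_append, pcost, List.append_eq]
    have h1 := pcost_last c htri a b t' b
    have h2 := hc0 a b
    linarith

/-- shortcutting a cycle never increases its cost -/
lemma cycCost_filter_le (c : V → V → ℝ) (hc0 : ∀ x y, 0 ≤ c x y)
    (hcrefl : ∀ v, c v v = 0) (htri : ∀ x y z, c x z ≤ c x y + c y z) (Q : V → Bool) :
    ∀ (l : List V), cycCost c (l.filter Q) ≤ cycCost c l := by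
  intro l
  induction l with
  | nil => simp
  | cons a t ih =>
    by_cases ha : Q a = true
    · simp only [List.filter_cons, ha, if_pos]
      rw [cycCost_cons, cycCost_cons]
      exact pcost_filter c hc0 htri Q a t a
    · simp only [List.filter_cons, ha, Bool.false_eq_true, if_neg, not_false_iff]
      exact le_trans ih (cycCost_cons_le c hc0 hcrefl htri a t)

lemma cycCost_eq_sum (c : V → V → ℝ) (l : List V) :
    cycCost c l = ∑ i : Fin l.length,
      c (l.get i) (l.get ⟨((i : ℕ) + 1) % l.length, Nat.mod_lt _ (i.pos)⟩) := by
  rw [Fin.sum_univ_def, cycCost]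
  have hlen : (List.zipWith c l (l.rotate 1)).length = l.length := by
    simp [List.length_zipWith, List.length_rotate]
  have : List.zipWith c l (l.rotate 1) =
      (List.finRange l.length).map (fun i =>
        c (l.get i) (l.get ⟨((i : ℕ) + 1) % l.length, Nat.mod_lt _ i.pos⟩)) := by
    apply List.ext_getElem
    · simp [hlen]
    · intro n h1 h2
      simp only [List.getElem_zipWith, List.getElem_map, List.getElem_finRange]
      rw [List.getElem_rotate]
      congr 1
  rw [this]

lemma cycCost_nonneg (c : V → V → ℝ) (hc0 : ∀ x y, 0 ≤ c x y) (l : List V) :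
    0 ≤ cycCost c l := by
  rw [cycCost_eq_sum]
  exact Finset.sum_nonneg fun i _ => hc0 _ _

/-- filtering commutes with rotation -/
lemma filter_rotate (P : V → Bool) (S : List V) (t : ℕ) (ht : t ≤ S.length) :
    (S.rotate t).filter P = (S.filter P).rotate ((S.take t).countP P) := by
  have key : S.filter P = (S.take t).filter P ++ (S.drop t).filter P := by
    rw [← List.filter_append, List.take_append_drop]
  rw [List.rotate_eq_drop_append_take ht, List.filter_append, key,
    List.countP_eq_length_filter,
    List.rotate_eq_drop_append_take (by simp), List.drop_left, List.take_left]

/-- counting actives in the prefix ending at `u` -/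
lemma countP_take_indexOf (P : V → Bool) : ∀ (S : List V) (u : V), u ∈ S → P u = true →
    (S.take (S.idxOf u + 1)).countP P = (S.filter P).idxOf u + 1 := by
  intro S
  induction S with
  | nil => intro u hu; exact absurd hu List.not_mem_nil
  | cons x S' ih =>
    intro u hu hP
    by_cases hxu : x = u
    · subst hxu
      rw [List.idxOf_cons_self]
      simp [List.countP_cons, hP, List.filter_cons, hP]
    · have hu' : u ∈ S' := by
        rcases List.mem_cons.mp hu with h | h
        · exact absurd h.symm hxu
        · exact h
      rw [List.idxOf_cons_ne _ hxu, Nat.succ_eq_add_one]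
      rw [List.take_succ_cons, List.countP_cons, List.filter_cons]
      by_cases hPx : P x = true
      · simp only [hPx, if_true, List.idxOf_cons_ne _ hxu, Nat.succ_eq_add_one,
          ih u hu' hP]
      · have hf : P x = false := Bool.eq_false_iff.mpr hPx
        rw [if_neg hPx]
        simp [hf, ih u hu' hP]

/-- characterization of the next active vertex via takeWhile -/
lemma takeWhile_char (A : Finset V) : ∀ (R : List V) (v d : V), v ∈ R → v ∈ A →
    (((R.takeWhile (fun w => decide (w ≠ v))).toFinset ∩ A = ∅) ↔
      (R.filter (fun w => decide (w ∈ A))).headD d = v) := by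
  intro R
  induction R with
  | nil => intro v d hv; exact absurd hv List.not_mem_nil
  | cons x R' ih =>
    intro v d hv hvA
    by_cases hxv : x = v
    · subst hxv
      have h1 : (decide (x ≠ x)) = false := by simp
      have h2 : (decide (x ∈ A)) = true := by simpa using hvA
      rw [List.takeWhile_cons, h1, List.filter_cons, h2]
      simp
    · have h1 : (decide (x ≠ v)) = true := by simpa using hxv
      rw [List.takeWhile_cons, h1]
      simp only [if_true]
      have hv' : v ∈ R' := by
        rcases List.mem_cons.mp hv with h | h
        · exact absurd h.symm hxv
        · exact h
      by_cases hxA : x ∈ A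
      · have h2 : (decide (x ∈ A)) = true := by simpa using hxA
        rw [List.filter_cons, h2]
        simp only [if_true, List.headD_cons]
        constructor
        · intro h
          exact absurd (Finset.eq_empty_iff_forall_notMem.mp h x
            (Finset.mem_inter.mpr ⟨by simp, hxA⟩)) not_false
        · intro h; exact absurd h hxv
      · have h2 : (decide (x ∈ A)) = false := by simpa using hxA
        rw [List.filter_cons, h2]
        simp only [Bool.false_eq_true, if_false]
        rw [← ih v d hv' hvA]
        constructor
        · intro h
          rw [Finset.eq_empty_iff_forall_notMem] at h ⊢
          intro y hy
          rcases Finset.mem_inter.mp hy with ⟨hy1, hy2⟩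
          refine h y (Finset.mem_inter.mpr ⟨?_, hy2⟩)
          rw [List.toFinset_cons, Finset.mem_insert]
          exact Or.inr hy1
        · intro h
          rw [Finset.eq_empty_iff_forall_notMem] at h ⊢
          intro y hy
          rcases Finset.mem_inter.mp hy with ⟨hy1, hy2⟩
          rw [List.toFinset_cons, Finset.mem_insert] at hy1
          rcases hy1 with rfl | hy1
          · exact hxA hy2
          · exact h y (Finset.mem_inter.mpr ⟨hy1, hy2⟩)

/-- next active vertex after `u` -/
def nxt (S : List V) (A : Finset V) (u : V) : V :=
  ((S.rotate (S.idxOf u + 1)).filter (fun w => decide (w ∈ A))).headD u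

/-- vertices strictly between `u` and `v` on the cycle -/
def seg (S : List V) (u v : V) : Finset V :=
  ((S.rotate (S.idxOf u + 1)).takeWhile (fun w => decide (w ≠ v))).toFinset

lemma headD_eq_get (l : List V) (d : V) (h : 0 < l.length) : l.headD d = l.get ⟨0, h⟩ := by
  cases l with
  | nil => simp at h
  | cons a t => rfl

lemma nxt_mem {S : List V} {A : Finset V} {u : V} (hu : u ∈ S) (huA : u ∈ A) :
    nxt S A u ∈ A ∧ nxt S A u ∈ S := by
  have h1 : u ∈ (S.rotate (S.idxOf u + 1)).filter (fun w => decide (w ∈ A)) :=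
    List.mem_filter.mpr ⟨List.mem_rotate.mpr hu, by simpa using huA⟩
  have h2 : ((S.rotate (S.idxOf u + 1)).filter (fun w => decide (w ∈ A))) ≠ [] :=
    List.ne_nil_of_mem h1
  have h3 : nxt S A u ∈ (S.rotate (S.idxOf u + 1)).filter (fun w => decide (w ∈ A)) := by
    rw [nxt, headD_eq_get _ _ (List.length_pos_iff.mpr h2)]
    exact List.get_mem _ _
  exact ⟨by simpa using (List.mem_filter.mp h3).2,
    List.mem_rotate.mp (List.mem_of_mem_filter h3)⟩

lemma seg_iff {S : List V} {A : Finset V} {u : V} (hu : u ∈ S) (huA : u ∈ A)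
    (v : V) (hv : v ∈ S) :
    (v ∈ A ∧ seg S u v ∩ A = ∅) ↔ v = nxt S A u := by
  constructor
  · rintro ⟨hvA, hseg⟩
    exact ((takeWhile_char A _ v u (List.mem_rotate.mpr hv) hvA).mp hseg).symm
  · rintro rfl
    obtain ⟨hA', hS'⟩ := nxt_mem hu huA
    exact ⟨hA', (takeWhile_char A _ _ u (List.mem_rotate.mpr hS') hA').mpr rfl⟩

lemma nxt_get {S : List V} {A : Finset V} (hS : S.Nodup)
    (i : Fin (S.filter (fun w => decide (w ∈ A))).length) :
    nxt S A ((S.filter (fun w => decide (w ∈ A))).get i) =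
      (S.filter (fun w => decide (w ∈ A))).get
        ⟨((i : ℕ) + 1) % (S.filter (fun w => decide (w ∈ A))).length,
          Nat.mod_lt _ i.pos⟩ := by
  have hul : (S.filter (fun w => decide (w ∈ A))).get i ∈
      S.filter (fun w => decide (w ∈ A)) := List.get_mem _ _
  have huA : (decide ((S.filter (fun w => decide (w ∈ A))).get i ∈ A)) = true :=
    (List.mem_filter.mp hul).2
  have huS : (S.filter (fun w => decide (w ∈ A))).get i ∈ S := List.mem_of_mem_filter hul
  have hidx : S.idxOf ((S.filter (fun w => decide (w ∈ A))).get i) + 1 ≤ S.length :=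
    Nat.succ_le_of_lt (List.idxOf_lt_length_iff.mpr huS)
  have hne : S.filter (fun w => decide (w ∈ A)) ≠ [] := List.ne_nil_of_mem hul
  rw [nxt, filter_rotate _ S _ hidx, countP_take_indexOf _ S _ huS huA,
    List.get_idxOf (hS.filter _) i]
  have hpos : 0 < ((S.filter (fun w => decide (w ∈ A))).rotate ((i : ℕ) + 1)).length := by
    rw [List.length_rotate]; exact List.length_pos_iff.mpr hne
  rw [headD_eq_get _ _ hpos, List.get_rotate]
  congr 1
  simp

lemma sum_toFinset_get {l : List V} (hl : l.Nodup) (g : V → ℝ) :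
    ∑ u ∈ l.toFinset, g u = ∑ i : Fin l.length, g (l.get i) := by
  rw [List.sum_toFinset _ hl, Fin.sum_univ_def]
  conv_lhs => rw [← List.map_get_finRange l]
  rw [List.map_map]
  rfl

lemma filter_toFinset_of_univ [Fintype V] {S : List V} (hSu : S.toFinset = Finset.univ)
    (A : Finset V) : (S.filter (fun w => decide (w ∈ A))).toFinset = A := by
  ext x
  simp only [List.mem_toFinset, List.mem_filter, decide_eq_true_eq]
  exact ⟨fun h => h.2, fun h =>
    ⟨by rw [← List.mem_toFinset, hSu]; exact Finset.mem_univ x, h⟩⟩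

lemma cyc_decomp [Fintype V] (c : V → V → ℝ) {S : List V} (hS : S.Nodup)
    (hSu : S.toFinset = Finset.univ) (A : Finset V) :
    cycCost c (S.filter (fun w => decide (w ∈ A))) = ∑ u ∈ A, c u (nxt S A u) := by
  rw [cycCost_eq_sum]
  have h2 := sum_toFinset_get (l := S.filter (fun w => decide (w ∈ A)))
    (hS.filter _) (fun u => c u (nxt S A u))
  rw [filter_toFinset_of_univ hSu A] at h2
  rw [h2]
  exact Finset.sum_congr rfl fun i _ => by rw [nxt_get hS i]

lemma cyc_decomp_univ [Fintype V] (c : V → V → ℝ) {S : List V} (hS : S.Nodup)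
    (hSu : S.toFinset = Finset.univ) (A : Finset V) :
    cycCost c (S.filter (fun w => decide (w ∈ A))) =
      ∑ u : V, ∑ v : V,
        (if u ∈ A ∧ v ∈ A ∧ seg S u v ∩ A = ∅ then (1:ℝ) else 0) * c u v := by
  rw [cyc_decomp c hS hSu A]
  have hmem : ∀ x : V, x ∈ S := fun x => by
    rw [← List.mem_toFinset, hSu]; exact Finset.mem_univ x
  have inner : ∀ u : V,
      (∑ v : V, (if u ∈ A ∧ v ∈ A ∧ seg S u v ∩ A = ∅ then (1:ℝ) else 0) * c u v) =
      if u ∈ A then c u (nxt S A u) else 0 := by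
    intro u
    by_cases huA : u ∈ A
    · have key : ∀ v : V, (u ∈ A ∧ v ∈ A ∧ seg S u v ∩ A = ∅) ↔ v = nxt S A u := by
        intro v
        rw [← seg_iff (hmem u) huA v (hmem v)]
        exact ⟨fun h => h.2, fun h => ⟨huA, h⟩⟩
      rw [if_pos huA]
      calc (∑ v : V, (if u ∈ A ∧ v ∈ A ∧ seg S u v ∩ A = ∅ then (1:ℝ) else 0) * c u v)
          = ∑ v : V, if v = nxt S A u then c u v else 0 :=
            Finset.sum_congr rfl fun v _ => by
              rw [if_congr (key v) rfl rfl, ite_mul, one_mul, zero_mul]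
        _ = c u (nxt S A u) := by
            rw [Finset.sum_ite_eq' Finset.univ (nxt S A u) (fun v => c u v),
              if_pos (Finset.mem_univ _)]
    · rw [if_neg huA]
      refine Finset.sum_eq_zero fun v _ => ?_
      rw [if_neg (fun h => huA h.1), zero_mul]
  rw [Finset.sum_congr rfl fun u _ => inner u, Finset.sum_ite_mem, Finset.univ_inter]


end ListPart

section ProbPart
variable {V : Type*} [Fintype V] [DecidableEq V]

/-- the weight of an outcome -/
def wgt (p : V → ℝ) (A : Finset V) : ℝ := (∏ v ∈ A, p v) * (∏ v ∈ Aᶜ, (1 - p v))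

lemma apExpect_eq (p : V → ℝ) (f : Finset V → ℝ) :
    apExpect p f = ∑ A : Finset V, wgt p A * f A := rfl

lemma wgt_nonneg {p : V → ℝ} (hp0 : ∀ v, 0 ≤ p v) (hp1 : ∀ v, p v ≤ 1) (A : Finset V) :
    0 ≤ wgt p A :=
  mul_nonneg (Finset.prod_nonneg fun v _ => hp0 v)
    (Finset.prod_nonneg fun v _ => by linarith [hp1 v])

lemma apExpect_nonneg {p : V → ℝ} (hp0 : ∀ v, 0 ≤ p v) (hp1 : ∀ v, p v ≤ 1)
    {f : Finset V → ℝ} (hf : ∀ A, 0 ≤ f A) : 0 ≤ apExpect p f :=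
  Finset.sum_nonneg fun A _ => mul_nonneg (wgt_nonneg hp0 hp1 A) (hf A)

/-- splitting a sum over all subsets at one element -/
lemma sum_split (d : V) (g : Finset V → ℝ) :
    ∑ A : Finset V, g A =
      ∑ A ∈ (Finset.univ.erase d).powerset, (g A + g (insert d A)) := by
  have h1 : (Finset.univ : Finset (Finset V)) = (insert d (Finset.univ.erase d)).powerset := by
    rw [Finset.insert_erase (Finset.mem_univ d), Finset.powerset_univ]
  rw [h1, Finset.sum_powerset_insert (Finset.notMem_erase d _), Finset.sum_add_distrib]

lemma compl_insert_of_not_mem {d : V} {A : Finset V} (hd : d ∉ A) :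
    (insert d A)ᶜ = (Finset.univ.erase d) \ A := by
  ext x
  simp only [Finset.mem_compl, Finset.mem_insert, Finset.mem_sdiff, Finset.mem_erase,
    Finset.mem_univ, and_true]
  tauto

lemma compl_of_not_mem {d : V} {A : Finset V} (hd : d ∉ A) :
    Aᶜ = insert d ((Finset.univ.erase d) \ A) := by
  ext x
  simp only [Finset.mem_compl, Finset.mem_insert, Finset.mem_sdiff, Finset.mem_erase,
    Finset.mem_univ, and_true]
  by_cases hx : x = d <;> simp [hx] <;> tauto

/-- reduced weight ignoring coordinate `d` -/
def rwgt (p : V → ℝ) (d : V) (A : Finset V) : ℝ :=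
  (∏ v ∈ A, p v) * (∏ v ∈ (Finset.univ.erase d) \ A, (1 - p v))

lemma wgt_insert {p : V → ℝ} {d : V} {A : Finset V} (hd : d ∉ A) :
    wgt p (insert d A) = p d * rwgt p d A := by
  rw [wgt, rwgt, compl_insert_of_not_mem hd, Finset.prod_insert hd]
  ring

lemma wgt_of_not_mem {p : V → ℝ} {d : V} {A : Finset V} (hd : d ∉ A) :
    wgt p A = (1 - p d) * rwgt p d A := by
  have hd2 : d ∉ (Finset.univ.erase d) \ A := by simp
  rw [wgt, rwgt, compl_of_not_mem hd, Finset.prod_insert hd2]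
  ring

lemma apExpect_split (p : V → ℝ) (d : V) (f : Finset V → ℝ) :
    apExpect p f = ∑ A ∈ (Finset.univ.erase d).powerset,
      rwgt p d A * ((1 - p d) * f A + p d * f (insert d A)) := by
  rw [apExpect_eq, sum_split d]
  refine Finset.sum_congr rfl fun A hA => ?_
  have hd : d ∉ A := fun h =>
    Finset.notMem_erase d _ (Finset.mem_powerset.mp hA h)
  rw [wgt_insert hd, wgt_of_not_mem hd]
  ring

lemma apExpect_update (p : V → ℝ) (d : V) (f : Finset V → ℝ) :
    apExpect (Function.update p d 1) f =
      ∑ A ∈ (Finset.univ.erase d).powerset, rwgt p d A * f (insert d A) := by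
  rw [apExpect_split (Function.update p d 1) d f]
  refine Finset.sum_congr rfl fun A hA => ?_
  have hd : d ∉ A := fun h => Finset.notMem_erase d _ (Finset.mem_powerset.mp hA h)
  have hdd : d ∉ (Finset.univ.erase d) \ A := by simp
  have hr : rwgt (Function.update p d 1) d A = rwgt p d A := by
    rw [rwgt, rwgt]
    congr 1
    · exact Finset.prod_congr rfl fun v hv => by
        rw [Function.update_of_ne]; rintro rfl; exact hd hv
    · exact Finset.prod_congr rfl fun v hv => by
        rw [Function.update_of_ne]; rintro rfl; exact hdd hv
  rw [hr, Function.update_self]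
  ring

/-- conditioning identity: if `g` does not depend on coordinate `x`, then
`E[1_{x∈A} g] = p x * E[g]`. -/
lemma cond_indep (p : V → ℝ) (x : V) (g : Finset V → ℝ)
    (hg : ∀ A : Finset V, x ∉ A → g (insert x A) = g A) :
    ∑ A : Finset V, wgt p A * (if x ∈ A then g A else 0) =
      p x * ∑ A : Finset V, wgt p A * g A := by
  rw [sum_split x, sum_split x (fun A => wgt p A * g A), Finset.mul_sum]
  refine Finset.sum_congr rfl fun A hA => ?_
  have hd : x ∉ A := fun h => Finset.notMem_erase x _ (Finset.mem_powerset.mp hA h)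
  rw [if_neg hd, if_pos (Finset.mem_insert_self x A), wgt_insert hd, wgt_of_not_mem hd,
    hg A hd]
  ring



lemma rwgt_nonneg {p : V → ℝ} (hp0 : ∀ v, 0 ≤ p v) (hp1 : ∀ v, p v ≤ 1) (d : V)
    (A : Finset V) : 0 ≤ rwgt p d A :=
  mul_nonneg (Finset.prod_nonneg fun v _ => hp0 v)
    (Finset.prod_nonneg fun v _ => by linarith [hp1 v])

lemma cond_update (p : V → ℝ) (d : V) (f : Finset V → ℝ) :
    p d * apExpect (Function.update p d 1) f =
      ∑ A : Finset V, wgt p A * (if d ∈ A then f A else 0) := by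
  rw [apExpect_update p d f,
    sum_split d (fun A => wgt p A * (if d ∈ A then f A else 0)), Finset.mul_sum]
  refine Finset.sum_congr rfl fun A hA => ?_
  have hd : d ∉ A := fun h => Finset.notMem_erase d _ (Finset.mem_powerset.mp hA h)
  rw [if_neg hd, if_pos (Finset.mem_insert_self d A), wgt_insert hd, mul_zero, zero_add]
  ring

/-- the indicator that `(u,v)` is an edge of the shortcut tour on `A` -/
def ind (S : List V) (A : Finset V) (u v : V) : ℝ :=
  if u ∈ A ∧ v ∈ A ∧ seg S u v ∩ A = ∅ then 1 else 0

lemma ind_nonneg (S : List V) (A : Finset V) (u v : V) : 0 ≤ ind S A u v := by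
  rw [ind]; split_ifs <;> norm_num

lemma ind_indep {S : List V} {u v x : V} (hx1 : x ≠ u) (hx2 : x ≠ v)
    (hx3 : x ∉ seg S u v) (A : Finset V) (hxA : x ∉ A) :
    ind S (insert x A) u v = ind S A u v := by
  have h1 : u ∈ insert x A ↔ u ∈ A :=
    ⟨fun h => (Finset.mem_insert.mp h).resolve_left (fun h' => hx1 h'.symm),
      fun h => Finset.mem_insert_of_mem h⟩
  have h2 : v ∈ insert x A ↔ v ∈ A :=
    ⟨fun h => (Finset.mem_insert.mp h).resolve_left (fun h' => hx2 h'.symm),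
      fun h => Finset.mem_insert_of_mem h⟩
  have h3 : seg S u v ∩ insert x A = seg S u v ∩ A := by
    ext y
    simp only [Finset.mem_inter, Finset.mem_insert]
    constructor
    · rintro ⟨hy, rfl | hy2⟩
      · exact absurd hy hx3
      · exact ⟨hy, hy2⟩
    · rintro ⟨hy, hy2⟩
      exact ⟨hy, Or.inr hy2⟩
  rw [ind, ind]
  exact if_congr (and_congr h1 (and_congr h2 (iff_of_eq (by rw [h3])))) rfl rfl

lemma core_uv {p : V → ℝ} (hp0 : ∀ v, 0 ≤ p v) (hp1 : ∀ v, p v ≤ 1)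
    (S : List V) (u v : V) :
    ∑ A : Finset V, wgt p A * (((A.card : ℝ)) * ind S A u v) ≤
      (2 + ∑ x, p x) * ∑ A : Finset V, wgt p A * ind S A u v := by
  set K : Finset V := insert u (insert v (seg S u v)) with hK
  have hq0 : 0 ≤ ∑ A : Finset V, wgt p A * ind S A u v :=
    Finset.sum_nonneg fun A _ => mul_nonneg (wgt_nonneg hp0 hp1 A) (ind_nonneg S A u v)
  have step1 : ∀ A : Finset V, wgt p A * (((A.card : ℝ)) * ind S A u v) ≤
      wgt p A * (ind S A u v * (2 + ((A \ K).card : ℝ))) := by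
    intro A
    by_cases hcond : u ∈ A ∧ v ∈ A ∧ seg S u v ∩ A = ∅
    · have hind : ind S A u v = 1 := if_pos hcond
      rw [hind, mul_one, one_mul]
      refine mul_le_mul_of_nonneg_left ?_ (wgt_nonneg hp0 hp1 A)
      have hsub : A ∩ K ⊆ insert u {v} := by
        intro x hx
        rcases Finset.mem_inter.mp hx with ⟨hxA, hxK⟩
        rcases Finset.mem_insert.mp hxK with rfl | hxK
        · exact Finset.mem_insert_self _ _
        rcases Finset.mem_insert.mp hxK with rfl | hxK
        · exact Finset.mem_insert_of_mem (Finset.mem_singleton_self _)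
        · exact absurd (Finset.mem_inter.mpr ⟨hxK, hxA⟩)
            (by rw [hcond.2.2]; exact Finset.notMem_empty x)
      have hcard : (A ∩ K).card ≤ 2 :=
        le_trans (Finset.card_le_card hsub)
          (le_trans (Finset.card_insert_le _ _) (by simp))
      have hsplit : (A ∩ K).card + (A \ K).card = A.card :=
        Finset.card_inter_add_card_sdiff A K
      have h2 : (A.card : ℝ) = ((A ∩ K).card : ℝ) + ((A \ K).card : ℝ) := by
        rw [← hsplit]; push_cast; ring
      have h3 : ((A ∩ K).card : ℝ) ≤ 2 := by exact_mod_cast hcard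
      linarith
    · have hind : ind S A u v = 0 := if_neg hcond
      rw [hind]
      simp
  have hindep : ∀ x ∈ Finset.univ \ K,
      (∑ A : Finset V, wgt p A * (if x ∈ A then ind S A u v else 0)) =
        p x * ∑ A : Finset V, wgt p A * ind S A u v := by
    intro x hx
    have hxK : x ∉ K := (Finset.mem_sdiff.mp hx).2
    have hx1 : x ≠ u := fun h => hxK (h ▸ Finset.mem_insert_self _ _)
    have hx2 : x ≠ v := fun h =>
      hxK (h ▸ Finset.mem_insert_of_mem (Finset.mem_insert_self _ _))
    have hx3 : x ∉ seg S u v := fun h =>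
      hxK (Finset.mem_insert_of_mem (Finset.mem_insert_of_mem h))
    exact cond_indep p x (fun A => ind S A u v) (fun A hxA =>
      ind_indep hx1 hx2 hx3 A hxA)
  have step2 : ∑ A : Finset V, (wgt p A * ind S A u v) * ((A \ K).card : ℝ) ≤
      (∑ x, p x) * ∑ A : Finset V, wgt p A * ind S A u v := by
    have hexp : ∀ A : Finset V, (wgt p A * ind S A u v) * ((A \ K).card : ℝ) =
        ∑ x ∈ Finset.univ \ K, wgt p A * (if x ∈ A then ind S A u v else 0) := by
      intro A
      have hc : ((A \ K).card : ℝ) = ∑ x ∈ Finset.univ \ K, (if x ∈ A then (1:ℝ) else 0) := by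
        rw [Finset.sum_ite_mem, Finset.sum_const, nsmul_eq_mul, mul_one]
        congr 2
        ext y
        simp only [Finset.mem_inter, Finset.mem_sdiff, Finset.mem_univ, true_and]
        tauto
      rw [hc, Finset.mul_sum]
      refine Finset.sum_congr rfl fun x _ => ?_
      rw [mul_ite, mul_ite, mul_one, mul_zero, mul_zero]
    calc ∑ A : Finset V, (wgt p A * ind S A u v) * ((A \ K).card : ℝ)
        = ∑ A : Finset V, ∑ x ∈ Finset.univ \ K,
            wgt p A * (if x ∈ A then ind S A u v else 0) :=
          Finset.sum_congr rfl fun A _ => hexp A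
      _ = ∑ x ∈ Finset.univ \ K, ∑ A : Finset V,
            wgt p A * (if x ∈ A then ind S A u v else 0) := Finset.sum_comm
      _ = ∑ x ∈ Finset.univ \ K, p x * ∑ A : Finset V, wgt p A * ind S A u v :=
          Finset.sum_congr rfl hindep
      _ ≤ ∑ x : V, p x * ∑ A : Finset V, wgt p A * ind S A u v := by
          refine Finset.sum_le_sum_of_subset_of_nonneg (Finset.subset_univ _)
            fun x _ _ => mul_nonneg (hp0 x) hq0
      _ = (∑ x, p x) * ∑ A : Finset V, wgt p A * ind S A u v := by
          rw [Finset.sum_mul]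
  calc ∑ A : Finset V, wgt p A * (((A.card : ℝ)) * ind S A u v)
      ≤ ∑ A : Finset V, wgt p A * (ind S A u v * (2 + ((A \ K).card : ℝ))) :=
        Finset.sum_le_sum fun A _ => step1 A
    _ = 2 * (∑ A : Finset V, wgt p A * ind S A u v) +
          ∑ A : Finset V, (wgt p A * ind S A u v) * ((A \ K).card : ℝ) := by
        rw [Finset.mul_sum, ← Finset.sum_add_distrib]
        exact Finset.sum_congr rfl fun A _ => by ring
    _ ≤ 2 * (∑ A : Finset V, wgt p A * ind S A u v) +
          (∑ x, p x) * ∑ A : Finset V, wgt p A * ind S A u v := by linarith [step2]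
    _ = (2 + ∑ x, p x) * ∑ A : Finset V, wgt p A * ind S A u v := by ring


lemma card_mul (A : Finset V) (r : ℝ) :
    (∑ d : V, if d ∈ A then r else 0) = (A.card : ℝ) * r := by
  rw [Finset.sum_ite_mem, Finset.univ_inter, Finset.sum_const, nsmul_eq_mul]

lemma main_est (c : V → V → ℝ) (p : V → ℝ) (hc0 : ∀ x y, 0 ≤ c x y)
    (hp0 : ∀ v, 0 ≤ p v) (hp1 : ∀ v, p v ≤ 1)
    {S : List V} (hS : S.Nodup) (hSu : S.toFinset = Finset.univ) :
    ∑ d : V, p d * apExpect (Function.update p d 1) (fun A => cycCost c (shortcut S A)) ≤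
      (2 + ∑ v, p v) * apExpect p (fun A => cycCost c (shortcut S A)) := by
  have hfeq : ∀ A : Finset V, cycCost c (shortcut S A) =
      ∑ u : V, ∑ v : V, ind S A u v * c u v := by
    intro A
    have h : shortcut S A = S.filter (fun w => decide (w ∈ A)) := rfl
    rw [h, cyc_decomp_univ c hS hSu A]
    rfl
  calc ∑ d : V, p d * apExpect (Function.update p d 1) (fun A => cycCost c (shortcut S A))
      = ∑ d : V, ∑ A : Finset V,
          wgt p A * (if d ∈ A then cycCost c (shortcut S A) else 0) :=
        Finset.sum_congr rfl fun d _ => cond_update p d _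
    _ = ∑ A : Finset V, wgt p A * ((A.card : ℝ) * cycCost c (shortcut S A)) := by
        rw [Finset.sum_comm]
        refine Finset.sum_congr rfl fun A _ => ?_
        rw [← Finset.mul_sum, card_mul]
    _ = ∑ A : Finset V, ∑ u : V, ∑ v : V,
          (wgt p A * ((A.card : ℝ) * ind S A u v)) * c u v := by
        refine Finset.sum_congr rfl fun A _ => ?_
        rw [hfeq A]
        simp only [Finset.mul_sum]
        exact Finset.sum_congr rfl fun u _ => Finset.sum_congr rfl fun v _ => by ring
    _ = ∑ u : V, ∑ v : V,
          (∑ A : Finset V, wgt p A * ((A.card : ℝ) * ind S A u v)) * c u v := by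
        rw [Finset.sum_comm]
        refine Finset.sum_congr rfl fun u _ => ?_
        rw [Finset.sum_comm]
        exact Finset.sum_congr rfl fun v _ => by rw [Finset.sum_mul]
    _ ≤ ∑ u : V, ∑ v : V,
          ((2 + ∑ x, p x) * ∑ A : Finset V, wgt p A * ind S A u v) * c u v :=
        Finset.sum_le_sum fun u _ => Finset.sum_le_sum fun v _ =>
          mul_le_mul_of_nonneg_right (core_uv hp0 hp1 S u v) (hc0 u v)
    _ = (2 + ∑ v, p v) * apExpect p (fun A => cycCost c (shortcut S A)) := by
        rw [apExpect_eq, Finset.mul_sum]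
        have : ∀ A : Finset V, wgt p A * cycCost c (shortcut S A) =
            ∑ u : V, ∑ v : V, (wgt p A * ind S A u v) * c u v := by
          intro A
          rw [hfeq A]
          simp only [Finset.mul_sum]
          exact Finset.sum_congr rfl fun u _ => Finset.sum_congr rfl fun v _ => by ring
        calc ∑ u : V, ∑ v : V,
              ((2 + ∑ x, p x) * ∑ A : Finset V, wgt p A * ind S A u v) * c u v
            = ∑ u : V, ∑ v : V, (2 + ∑ x, p x) *
                ∑ A : Finset V, (wgt p A * ind S A u v) * c u v := by
              refine Finset.sum_congr rfl fun u _ => Finset.sum_congr rfl fun v _ => ?_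
              simp only [Finset.sum_mul, Finset.mul_sum]
              exact Finset.sum_congr rfl fun A _ => by ring
          _ = (2 + ∑ x, p x) * ∑ u : V, ∑ v : V,
                ∑ A : Finset V, (wgt p A * ind S A u v) * c u v := by
              rw [Finset.mul_sum]
              exact Finset.sum_congr rfl fun u _ => by rw [Finset.mul_sum]
          _ = (2 + ∑ x, p x) * ∑ A : Finset V,
                ∑ u : V, ∑ v : V, (wgt p A * ind S A u v) * c u v := by
              congr 1
              refine Eq.trans (Finset.sum_congr rfl fun u _ => Finset.sum_comm) ?_
              exact Finset.sum_comm
          _ = ∑ A : Finset V, (2 + ∑ x, p x) * (wgt p A * cycCost c (shortcut S A)) := by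
              rw [Finset.mul_sum]
              exact Finset.sum_congr rfl fun A _ => by rw [this A]

end ProbPart

end S7

/-- there is a vertex `d` such that raising its activation probability to `1`
(i) never decreases the expected short-cut cost of any tour, and (ii) increases the expected
short-cut cost of the given tour `S` by a factor of at most `2·(1 + 1/p(V))`. -/
theorem statement7 {V : Type*} [Fintype V] [DecidableEq V]
    (c : V → V → ℝ) (p : V → ℝ)
    (hc0 : ∀ x y, 0 ≤ c x y)
    (hcrefl : ∀ v, c v v = 0)
    (htri : ∀ x y z, c x z ≤ c x y + c y z)
    (hp0 : ∀ v, 0 ≤ p v) (hp1 : ∀ v, p v ≤ 1)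
    (hpV : 0 < ∑ v, p v)
    (S : List V) (hS : IsTour Finset.univ S) :
    ∃ d : V,
      (∀ T : List V, IsTour Finset.univ T →
        apExpect p (fun A => cycCost c (shortcut T A)) ≤
          apExpect (Function.update p d 1) (fun A => cycCost c (shortcut T A))) ∧
      apExpect (Function.update p d 1) (fun A => cycCost c (shortcut S A)) ≤
        2 * (1 + 1 / (∑ v, p v)) * apExpect p (fun A => cycCost c (shortcut S A)) := by
  classical
  obtain ⟨hSnd, hSu⟩ := hS
  -- part (i) holds for every choice of d
  have hmono : ∀ (d : V) (T : List V),
      apExpect p (fun A => cycCost c (shortcut T A)) ≤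
        apExpect (Function.update p d 1) (fun A => cycCost c (shortcut T A)) := by
    intro d T
    rw [S7.apExpect_split p d, S7.apExpect_update p d]
    refine Finset.sum_le_sum fun A hA => ?_
    have hd : d ∉ A := fun h => Finset.notMem_erase d _ (Finset.mem_powerset.mp hA h)
    have hle : cycCost c (shortcut T A) ≤ cycCost c (shortcut T (insert d A)) := by
      have heq : shortcut T A =
          (shortcut T (insert d A)).filter (fun w => decide (w ∈ A)) := by
        rw [shortcut, shortcut, List.filter_filter]
        refine (List.filter_congr fun x hx => ?_)
        by_cases hxA : x ∈ A
        · simp [hxA, Finset.mem_insert_of_mem hxA]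
        · simp [hxA]
      rw [heq]
      exact S7.cycCost_filter_le c hc0 hcrefl htri _ _
    have hw : 0 ≤ S7.rwgt p d A := S7.rwgt_nonneg hp0 hp1 d A
    refine mul_le_mul_of_nonneg_left ?_ hw
    have h1 : (1 - p d) * cycCost c (shortcut T A) ≤
        (1 - p d) * cycCost c (shortcut T (insert d A)) :=
      mul_le_mul_of_nonneg_left hle (by linarith [hp1 d])
    linarith
  -- part (ii) for a good choice of d
  have hfnn : ∀ A : Finset V, 0 ≤ cycCost c (shortcut S A) :=
    fun A => S7.cycCost_nonneg c hc0 _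
  have hE0 : 0 ≤ apExpect p (fun A => cycCost c (shortcut S A)) :=
    S7.apExpect_nonneg hp0 hp1 hfnn
  have hup0 : ∀ d v : V, 0 ≤ Function.update p d 1 v := by
    intro d v
    rcases eq_or_ne v d with rfl | h
    · rw [Function.update_self]; norm_num
    · rw [Function.update_of_ne h]; exact hp0 v
  have hup1 : ∀ d v : V, Function.update p d 1 v ≤ 1 := by
    intro d v
    rcases eq_or_ne v d with rfl | h
    · rw [Function.update_self]
    · rw [Function.update_of_ne h]; exact hp1 v
  have hme := S7.main_est c p hc0 hp0 hp1 hSnd hSu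
  have hex : ∃ d : V,
      apExpect (Function.update p d 1) (fun A => cycCost c (shortcut S A)) ≤
        2 * (1 + 1 / (∑ v, p v)) * apExpect p (fun A => cycCost c (shortcut S A)) := by
    by_contra hcon
    push_neg at hcon
    set E := apExpect p (fun A => cycCost c (shortcut S A)) with hEdef
    set P := ∑ v, p v with hPdef
    have hPne : P ≠ 0 := ne_of_gt hpV
    have hsum : P * (2 * (1 + 1 / P) * E) ≤
        ∑ d : V, p d * apExpect (Function.update p d 1)
          (fun A => cycCost c (shortcut S A)) := by
      rw [Finset.sum_mul]
      exact Finset.sum_le_sum fun d _ =>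
        mul_le_mul_of_nonneg_left (le_of_lt (hcon d)) (hp0 d)
    have hidd : P * (2 * (1 + 1 / P) * E) = (2 + P) * E + P * E := by
      field_simp
      ring
    have hchain : (2 + P) * E + P * E ≤ (2 + P) * E := by
      rw [← hidd]
      exact le_trans hsum hme
    have hPE : P * E ≤ 0 := by linarith
    have hEle : E ≤ 0 := by nlinarith
    have hE : E = 0 := le_antisymm hEle hE0
    obtain ⟨d0, hd0⟩ : ∃ d : V, 0 < p d := by
      by_contra h
      push_neg at h
      have : (∑ v, p v) ≤ 0 := Finset.sum_nonpos fun v _ => h v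
      linarith
    have h1 : 0 < apExpect (Function.update p d0 1)
        (fun A => cycCost c (shortcut S A)) := by
      have := hcon d0
      rw [hE] at this
      simpa using this
    have h2 : 0 < p d0 * apExpect (Function.update p d0 1)
        (fun A => cycCost c (shortcut S A)) := mul_pos hd0 h1
    have h4 : p d0 * apExpect (Function.update p d0 1)
          (fun A => cycCost c (shortcut S A)) ≤
        ∑ d : V, p d * apExpect (Function.update p d 1)
          (fun A => cycCost c (shortcut S A)) :=
      Finset.single_le_sum (f := fun d => p d * apExpect (Function.update p d 1)
          (fun A => cycCost c (shortcut S A)))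
        (fun d _ => mul_nonneg (hp0 d)
          (S7.apExpect_nonneg (hup0 d) (hup1 d) hfnn)) (Finset.mem_univ d0)
    have h5 : (2 + P) * E = 0 := by rw [hE]; ring
    linarith [le_trans h4 hme]
  obtain ⟨d, hd⟩ := hex
  exact ⟨d, fun T _ => hmono d T, hd⟩

end
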